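/- Let g : Λ → Λ be a finite Markov system induced by (Y, {Y_j}_{j=1}^l, g) with distortion constant C ≥ 1. Then liminf_{n→∞} (1/n) log Σ_{J ∈ W_n} m(Y_J) ≥ log Σ_{p=1}^l m(Y_p) − log m(Y) − log C, where W_n denotes the set of words of length n in the alphabet {1,…,l} and Y_J the corresponding cylinder set. -/

import Mathlib

open MeasureTheory Real Filter Topology

/-- The cylinder set `Y_{a_0⋯a_{n−1}} = Y_{a_0} ∩ g^{−1}Y_{a_1} ∩ ⋯ ∩ g^{−(n−1)}Y_{a_{n−1}}`
for a word `J` of length `n`. -/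
def cylinder {Y : Type*} (g : Y → Y) {l : ℕ} (Yj : Fin l → Set Y) {n : ℕ}
    (J : Fin n → Fin l) : Set Y :=
  {x | ∀ i : Fin n, g^[(i : ℕ)] x ∈ Yj (J i)}

lemma cylinder_cons {Y : Type*} (g : Y → Y) {l n : ℕ} (Yj : Fin l → Set Y)
    (p : Fin l) (J : Fin n → Fin l) :
    cylinder g Yj (Fin.cons p J) = Yj p ∩ g ⁻¹' (cylinder g Yj J) := by
  ext x
  simp only [_root_.cylinder, Set.mem_setOf_eq, Set.mem_inter_iff, Set.mem_preimage,
    Fin.forall_fin_succ, Fin.cons_zero, Fin.cons_succ, Fin.val_zero,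
    Function.iterate_zero, id_eq, Fin.val_succ, Function.iterate_succ_apply]

lemma cylinder_measurable {Y : Type*} [MeasurableSpace Y] (g : Y → Y) (hg : Measurable g)
    {l n : ℕ} (Yj : Fin l → Set Y) (hmeas : ∀ j, MeasurableSet (Yj j))
    (J : Fin n → Fin l) : MeasurableSet (cylinder g Yj J) := by
  have : cylinder g Yj J = ⋂ i : Fin n, (g^[(i : ℕ)]) ⁻¹' Yj (J i) := by
    ext x; simp [_root_.cylinder]
  rw [this]
  exact MeasurableSet.iInter fun i => (hg.iterate _) (hmeas _)

/-- One-step change of variables, `lintegral` form. -/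
lemma cov_lintegral {Y : Type*} [MeasurableSpace Y] (m : Measure Y) [IsFiniteMeasure m]
    (g : Y → Y) (Jac : Y → ℝ) (hJpos : ∀ x, 0 < Jac x) (hJmeas : Measurable Jac)
    (A : Set Y)
    (hCOV : ∀ S : Set Y, S ⊆ A → MeasurableSet S →
      m (g '' S) = ENNReal.ofReal (∫ x in S, Jac x ∂m)) :
    ∀ S : Set Y, S ⊆ A → MeasurableSet S →
      m (g '' S) = ∫⁻ x in S, ENNReal.ofReal (Jac x) ∂m := by
  intro S hSA hSm
  set Sk : ℕ → Set Y := fun k => S ∩ {x | Jac x ≤ (k : ℝ)} with hSkdef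
  have hmono : Monotone Sk := fun i j hij x hx =>
    ⟨hx.1, hx.2.trans ((Nat.cast_le (α := ℝ)).mpr hij)⟩
  have hmeask : ∀ k, MeasurableSet (Sk k) := fun k =>
    hSm.inter (hJmeas measurableSet_Iic)
  have hunion : (⋃ k, Sk k) = S := by
    apply Set.Subset.antisymm
    · exact Set.iUnion_subset fun k => Set.inter_subset_left
    · intro x hx
      exact Set.mem_iUnion.2 ⟨⌈Jac x⌉₊, hx, show Jac x ≤ ((⌈Jac x⌉₊ : ℕ) : ℝ) from Nat.le_ceil _⟩
  have hstep : ∀ k, m (g '' Sk k) = ∫⁻ x in Sk k, ENNReal.ofReal (Jac x) ∂m := by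
    intro k
    rw [hCOV _ (Set.inter_subset_left.trans hSA) (hmeask k)]
    apply ofReal_integral_eq_lintegral_ofReal
    · refine (integrable_const (k : ℝ)).mono' hJmeas.aestronglyMeasurable ?_
      refine (ae_restrict_mem (hmeask k)).mono fun x hx => ?_
      rw [Real.norm_eq_abs, abs_of_pos (hJpos x)]
      exact hx.2
    · exact Filter.Eventually.of_forall fun x => (hJpos x).le
  have h1 : Tendsto (fun k => m (g '' Sk k)) atTop (𝓝 (m (g '' S))) := by
    rw [← hunion, Set.image_iUnion]
    exact tendsto_measure_iUnion_atTop fun i j h => Set.image_mono (hmono h)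
  have h2 : Tendsto (fun k => ∫⁻ x in Sk k, ENNReal.ofReal (Jac x) ∂m) atTop
      (𝓝 (∫⁻ x in S, ENNReal.ofReal (Jac x) ∂m)) := by
    have h := tendsto_measure_iUnion_atTop
      (μ := m.withDensity fun x => ENNReal.ofReal (Jac x)) hmono
    rw [hunion] at h
    rw [withDensity_apply _ hSm] at h
    exact h.congr fun k => withDensity_apply _ (hmeask k)
  have h1' : Tendsto (fun k => ∫⁻ x in Sk k, ENNReal.ofReal (Jac x) ∂m) atTop
      (𝓝 (m (g '' S))) := h1.congr fun k => hstep k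
  exact tendsto_nhds_unique h1' h2

/-- For a finite Markov system `(Y, {Y_j}_{j=1}^l, g)` with distortion
constant `C ≥ 1`,
`liminf_n (1/n) log Σ_{J ∈ W_n} m(Y_J) ≥ log Σ_p m(Y_p) − log m(Y) − log C`. -/
theorem stmt2 {Y : Type*} [MeasurableSpace Y] (m : Measure Y) [IsFiniteMeasure m]
    (l : ℕ) (hl : 1 ≤ l) (Yj : Fin l → Set Y)
    (hmeas : ∀ j, MeasurableSet (Yj j))
    (hdisj : Pairwise (fun i j => Disjoint (Yj i) (Yj j)))
    (hpos : ∀ j, 0 < m (Yj j))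
    (g : Y → Y) (hg : Measurable g)
    (hinj : ∀ j, Set.InjOn g (Yj j)) (hsurj : ∀ j, g '' Yj j = Set.univ)
    (Jac : Y → ℝ) (hJpos : ∀ x, 0 < Jac x) (hJmeas : Measurable Jac)
    (hCOV : ∀ j, ∀ S : Set Y, S ⊆ Yj j → MeasurableSet S →
      m (g '' S) = ENNReal.ofReal (∫ x in S, Jac x ∂m))
    (C : ℝ) (hC : 1 ≤ C)
    (hdist : ∀ n : ℕ, 1 ≤ n → ∀ J : Fin n → Fin l,
      ∀ x ∈ cylinder g Yj J, ∀ y ∈ cylinder g Yj J,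
        (∏ i : Fin n, Jac (g^[(i : ℕ)] x)) ≤ C * ∏ i : Fin n, Jac (g^[(i : ℕ)] y)) :
    Real.log (∑ p : Fin l, (m (Yj p)).toReal) - Real.log (m Set.univ).toReal -
        Real.log C ≤
      liminf (fun n : ℕ =>
        Real.log (∑ J : Fin n → Fin l, (m (cylinder g Yj J)).toReal) / n) atTop := by
  have hC0 : (0:ℝ) < C := lt_of_lt_of_le one_pos hC
  set M : ENNReal := m Set.univ with hMdef
  set A : ENNReal := ∑ p : Fin l, m (Yj p) with hAdef
  set Snn : ℕ → ENNReal := fun n => ∑ J : Fin n → Fin l, m (cylinder g Yj J) with hSnndef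
  have covL : ∀ j, ∀ S : Set Y, S ⊆ Yj j → MeasurableSet S →
      m (g '' S) = ∫⁻ x in S, ENNReal.ofReal (Jac x) ∂m :=
    fun j => cov_lintegral m g Jac hJpos hJmeas (Yj j) (hCOV j)
  -- one-step distortion
  have hdist1 : ∀ p : Fin l, ∀ x ∈ Yj p, ∀ y ∈ Yj p, Jac x ≤ C * Jac y := by
    intro p x hx y hy
    have hcyl : ∀ z, z ∈ cylinder g Yj (fun _ : Fin 1 => p) ↔ z ∈ Yj p := by
      intro z
      simp [_root_.cylinder, Fin.forall_fin_one]
    have h := hdist 1 le_rfl (fun _ => p) x ((hcyl x).2 hx) y ((hcyl y).2 hy)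
    simpa [Fin.prod_univ_one] using h
  -- key recursion inequality, pointwise
  have key : ∀ (n : ℕ) (J : Fin n → Fin l) (p : Fin l),
      m (cylinder g Yj J) * m (Yj p) ≤
        ENNReal.ofReal C * M * m (cylinder g Yj (Fin.cons p J)) := by
    intro n J p
    set T : Set Y := cylinder g Yj (Fin.cons p J) with hTdef
    have hTeq : T = Yj p ∩ g ⁻¹' (cylinder g Yj J) := cylinder_cons g Yj p J
    have hTsub : T ⊆ Yj p := by rw [hTeq]; exact Set.inter_subset_left
    have hTm : MeasurableSet T := cylinder_measurable g hg Yj hmeas _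
    have himg : g '' T = cylinder g Yj J := by
      rw [hTeq, Set.image_inter_preimage, hsurj p, Set.univ_inter]
    have h1 : m (cylinder g Yj J) = ∫⁻ x in T, ENNReal.ofReal (Jac x) ∂m := by
      rw [← himg]; exact covL p T hTsub hTm
    have h2 : M = ∫⁻ x in Yj p, ENNReal.ofReal (Jac x) ∂m := by
      have : M = m (g '' Yj p) := by rw [hsurj p]
      rw [this]; exact covL p _ subset_rfl (hmeas p)
    have hbound : ∀ y ∈ Yj p,
        m (cylinder g Yj J) ≤ ENNReal.ofReal C * m T * ENNReal.ofReal (Jac y) := by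
      intro y hy
      rw [h1]
      calc ∫⁻ x in T, ENNReal.ofReal (Jac x) ∂m
          ≤ ∫⁻ _x in T, ENNReal.ofReal (C * Jac y) ∂m :=
            setLIntegral_mono' hTm fun x hx =>
              ENNReal.ofReal_le_ofReal (hdist1 p x (hTsub hx) y hy)
        _ = ENNReal.ofReal (C * Jac y) * m T := setLIntegral_const _ _
        _ = ENNReal.ofReal C * m T * ENNReal.ofReal (Jac y) := by
            rw [ENNReal.ofReal_mul hC0.le]; ring
    calc m (cylinder g Yj J) * m (Yj p)
        = ∫⁻ _y in Yj p, m (cylinder g Yj J) ∂m := (setLIntegral_const _ _).symm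
      _ ≤ ∫⁻ y in Yj p, ENNReal.ofReal C * m T * ENNReal.ofReal (Jac y) ∂m :=
          setLIntegral_mono' (hmeas p) hbound
      _ = ENNReal.ofReal C * m T * ∫⁻ y in Yj p, ENNReal.ofReal (Jac y) ∂m :=
          lintegral_const_mul _ hJmeas.ennreal_ofReal
      _ = ENNReal.ofReal C * M * m T := by rw [← h2]; ring
  -- recursion for the sums
  have recS : ∀ n, A * Snn n ≤ ENNReal.ofReal C * M * Snn (n + 1) := by
    intro n
    have hsum : Snn (n + 1) =
        ∑ p : Fin l, ∑ J : Fin n → Fin l, m (cylinder g Yj (Fin.cons p J)) := by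
      rw [show Snn (n+1) = ∑ K : Fin (n+1) → Fin l, m (cylinder g Yj K) from rfl]
      rw [← Fintype.sum_equiv (Fin.consEquiv fun _ => Fin l)
        (fun x : Fin l × (Fin n → Fin l) => m (cylinder g Yj (Fin.cons x.1 x.2)))
        (fun K => m (cylinder g Yj K)) (fun x => rfl)]
      rw [Fintype.sum_prod_type]
    calc A * Snn n
        = ∑ p : Fin l, ∑ J : Fin n → Fin l, m (Yj p) * m (cylinder g Yj J) :=
          Finset.sum_mul_sum _ _ _ _
      _ ≤ ∑ p : Fin l, ∑ J : Fin n → Fin l,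
            ENNReal.ofReal C * M * m (cylinder g Yj (Fin.cons p J)) :=
          Finset.sum_le_sum fun p _ => Finset.sum_le_sum fun J _ => by
            rw [mul_comm (m (Yj p))]; exact key n J p
      _ = ENNReal.ofReal C * M *
            ∑ p : Fin l, ∑ J : Fin n → Fin l, m (cylinder g Yj (Fin.cons p J)) := by
          simp [Finset.mul_sum]
      _ = ENNReal.ofReal C * M * Snn (n + 1) := by rw [hsum]
  -- iterated inequality
  have hS0 : Snn 0 = M := by
    have hcyl0 : ∀ J : Fin 0 → Fin l, cylinder g Yj J = Set.univ := by
      intro J; ext x; simp [_root_.cylinder]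
    simp [hSnndef, hcyl0, hMdef]
  have powS : ∀ n, A ^ n * M ≤ (ENNReal.ofReal C * M) ^ n * Snn n := by
    intro n
    induction n with
    | zero => simp [hS0]
    | succ n ih =>
      calc A ^ (n + 1) * M = (A ^ n * M) * A := by ring
        _ ≤ ((ENNReal.ofReal C * M) ^ n * Snn n) * A := mul_le_mul_left ih A
        _ = (ENNReal.ofReal C * M) ^ n * (A * Snn n) := by ring
        _ ≤ (ENNReal.ofReal C * M) ^ n * (ENNReal.ofReal C * M * Snn (n + 1)) :=
            mul_le_mul_right (recS n) _
        _ = (ENNReal.ofReal C * M) ^ (n + 1) * Snn (n + 1) := by ring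
  -- finiteness and positivity
  have hMfin : M ≠ ⊤ := measure_ne_top m _
  have hAfin : A ≠ ⊤ := (ENNReal.sum_lt_top.mpr fun p _ => measure_lt_top m _).ne
  have hSfin : ∀ n, Snn n ≠ ⊤ := fun n =>
    (ENNReal.sum_lt_top.mpr fun J _ => measure_lt_top m _).ne
  have hApos : 0 < A :=
    lt_of_lt_of_le (hpos ⟨0, hl⟩)
      (Finset.single_le_sum (f := fun p : Fin l => m (Yj p)) (fun _ _ => zero_le) (Finset.mem_univ (⟨0, hl⟩ : Fin l)))
  have hMpos : 0 < M :=
    lt_of_lt_of_le (hpos ⟨0, hl⟩) (measure_mono (Set.subset_univ _))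
  set a : ℝ := A.toReal with hadef
  set M' : ℝ := M.toReal with hM'def
  set s : ℕ → ℝ := fun n => (Snn n).toReal with hsdef
  have ha : 0 < a := ENNReal.toReal_pos hApos.ne' hAfin
  have hM' : 0 < M' := ENNReal.toReal_pos hMpos.ne' hMfin
  have rineq : ∀ n, a ^ n * M' ≤ (C * M') ^ n * s n := by
    intro n
    have hne : (ENNReal.ofReal C * M) ^ n * Snn n ≠ ⊤ :=
      ENNReal.mul_ne_top
        (ENNReal.pow_ne_top (ENNReal.mul_ne_top ENNReal.ofReal_ne_top hMfin)) (hSfin n)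
    have h := ENNReal.toReal_mono hne (powS n)
    rwa [ENNReal.toReal_mul, ENNReal.toReal_mul, ENNReal.toReal_pow, ENNReal.toReal_pow,
      ENNReal.toReal_mul, ENNReal.toReal_ofReal hC0.le] at h
  have hspos : ∀ n, 0 < s n := by
    intro n
    have h := rineq n
    nlinarith [pow_pos ha n, pow_pos (mul_pos hC0 hM') n, mul_pos (pow_pos ha n) hM']
  -- logarithmic lower bound
  have hlog : ∀ n : ℕ, 1 ≤ n →
      (Real.log a - Real.log M' - Real.log C) + Real.log M' / n ≤ Real.log (s n) / n := by
    intro n hn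
    have hn' : (0:ℝ) < n := by exact_mod_cast hn
    have hq : (0:ℝ) < (C * M') ^ n := by positivity
    have hdiv : a ^ n * M' / (C * M') ^ n ≤ s n :=
      (div_le_iff₀ hq).mpr (le_of_le_of_eq (rineq n) (mul_comm _ _))
    have hlog1 : Real.log (a ^ n * M' / (C * M') ^ n) ≤ Real.log (s n) :=
      Real.log_le_log (by positivity) hdiv
    rw [Real.log_div (by positivity) (ne_of_gt hq),
      Real.log_mul (by positivity) (ne_of_gt hM'), Real.log_pow, Real.log_pow,
      Real.log_mul (ne_of_gt hC0) (ne_of_gt hM')] at hlog1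
    rw [le_div_iff₀ hn']
    have hexp : ((Real.log a - Real.log M' - Real.log C) + Real.log M' / n) * n
        = n * Real.log a + Real.log M' - n * (Real.log C + Real.log M') := by
      field_simp; ring
    rw [hexp]
    linarith [hlog1]
  -- upper bound for coboundedness
  have hub : ∀ n : ℕ, 1 ≤ n → Real.log (s n) / n ≤ Real.log l + |Real.log M'| := by
    intro n hn
    have hn' : (0:ℝ) < n := by exact_mod_cast hn
    have hl' : (0:ℝ) < l := by exact_mod_cast hl
    have hsle : s n ≤ (l:ℝ) ^ n * M' := by
      have h1 : s n ≤ ∑ _J : Fin n → Fin l, M' := by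
        rw [hsdef]
        simp only
        rw [ENNReal.toReal_sum (fun J _ => measure_ne_top m _)]
        exact Finset.sum_le_sum fun J _ =>
          ENNReal.toReal_mono hMfin (measure_mono (Set.subset_univ _))
      have h2 : (∑ _J : Fin n → Fin l, M') = (l:ℝ) ^ n * M' := by
        rw [Finset.sum_const, Finset.card_univ]
        simp [Fintype.card_fun]
      linarith [h1, h2.symm.le]
    have hlog2 : Real.log (s n) ≤ n * Real.log l + Real.log M' := by
      have := Real.log_le_log (hspos n) hsle
      rwa [Real.log_mul (by positivity) (ne_of_gt hM'), Real.log_pow] at this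
    rw [div_le_iff₀ hn']
    have habs : Real.log M' ≤ |Real.log M'| := le_abs_self _
    have habs' : (1:ℝ) ≤ n := by exact_mod_cast hn
    have h0l : 0 ≤ Real.log l := Real.log_nonneg (by exact_mod_cast hl)
    have h0a : 0 ≤ |Real.log M'| := abs_nonneg _
    nlinarith [hlog2]
  -- pass to liminf
  set t : ℝ := Real.log a - Real.log M' - Real.log C with htdef
  set v : ℕ → ℝ := fun n =>
    Real.log (∑ J : Fin n → Fin l, (m (cylinder g Yj J)).toReal) / n with hvdef
  have hsv : ∀ n, Real.log (s n) / n = v n := by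
    intro n
    rw [hvdef, hsdef]
    simp only
    rw [ENNReal.toReal_sum (fun J _ => measure_ne_top m _)]
  set w : ℕ → ℝ := fun n => t + Real.log M' / n with hwdef
  have hw : Tendsto w atTop (𝓝 t) := by
    have := tendsto_const_nhds (x := t) (f := atTop (α := ℕ)) |>.add
      (tendsto_const_div_atTop_nhds_zero_nat (Real.log M'))
    simpa using this
  have hwv : ∀ᶠ n in atTop, w n ≤ v n := by
    refine eventually_atTop.mpr ⟨1, fun n hn => ?_⟩
    rw [← hsv n]
    exact hlog n hn
  have hbdd : IsBoundedUnder (· ≥ ·) atTop w := hw.isBoundedUnder_ge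
  have hcb : IsCoboundedUnder (· ≥ ·) atTop v := by
    apply isCoboundedUnder_ge_of_eventually_le atTop
      (x := Real.log l + |Real.log M'|)
    refine eventually_atTop.mpr ⟨1, fun n hn => ?_⟩
    rw [← hsv n]
    exact hub n hn
  have hfinal : t ≤ liminf v atTop := by
    have := liminf_le_liminf hwv hbdd hcb
    rwa [hw.liminf_eq] at this
  have haeq : a = ∑ p : Fin l, (m (Yj p)).toReal := by
    rw [hadef, hAdef]
    exact ENNReal.toReal_sum fun p _ => measure_ne_top m _
  rw [← haeq]
  exact hfinal
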